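/- arXiv:1608.07640 — 3 statements merged into one kernel-verified Lean document; each statement's English description precedes it below -/
import Mathlib

section
/- For each integer $n \ge 1$ and each sufficiently large real number $N$, there exists a measurable set $S \subset [0,1]^n$ with Lebesgue measure $|S| \ge 3/4$ such that for every $(y_1,\ldots,y_n) \in S$ there exists an integer $p$ with $4^{-n-1}N \le p \le N+2$ satisfying $\max_{1\le i\le n} \|p y_i\| \le N^{-1/n}$. -/
open MeasureTheory Metric Set
open scoped ENNReal

lemma torus_pigeonhole {n : ℕ} (y : Fin n → ℝ) {δ : ℝ} (hδ0 : 0 < δ) (hδ1 : δ ≤ 1)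
    {M : ℕ} (hM : 1 < (M + 1 : ℝ) * δ ^ n) :
    ∃ p : ℕ, 1 ≤ p ∧ p ≤ M ∧ ∀ i, ∃ k : ℤ, |(p : ℝ) * y i - (k : ℝ)| ≤ δ := by
  by_contra hcon
  push_neg at hcon
  set U : ℕ → Set (Fin n → UnitAddCircle) :=
    fun p => Set.pi Set.univ fun i => closedBall (((p : ℝ) * y i : ℝ) : UnitAddCircle) (δ / 2)
    with hU
  have hUmeas : ∀ p, MeasurableSet (U p) := fun p =>
    MeasurableSet.univ_pi fun i => measurableSet_closedBall
  have hdisj : ((Finset.range (M + 1) : Finset ℕ) : Set ℕ).PairwiseDisjoint U := by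
    have key : ∀ a b : ℕ, a < b → b < M + 1 → Disjoint (U a) (U b) := by
      intro a b hab hb
      refine Set.disjoint_left.2 fun x hxa hxb => ?_
      obtain ⟨i, hi⟩ := hcon (b - a) (by omega) (by omega)
      have hxa' : dist (x i) (((a : ℝ) * y i : ℝ) : UnitAddCircle) ≤ δ / 2 :=
        Set.mem_pi.mp hxa i (Set.mem_univ i)
      have hxb' : dist (x i) (((b : ℝ) * y i : ℝ) : UnitAddCircle) ≤ δ / 2 :=
        Set.mem_pi.mp hxb i (Set.mem_univ i)
      have h1 : dist (((a : ℝ) * y i : ℝ) : UnitAddCircle)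
          (((b : ℝ) * y i : ℝ) : UnitAddCircle) ≤ δ := by
        have ht := dist_triangle (((a : ℝ) * y i : ℝ) : UnitAddCircle) (x i)
          (((b : ℝ) * y i : ℝ) : UnitAddCircle)
        rw [dist_comm (((a : ℝ) * y i : ℝ) : UnitAddCircle) (x i)] at ht
        linarith
      set z : ℝ := ((b - a : ℕ) : ℝ) * y i with hz
      have h2 : ‖(z : UnitAddCircle)‖ ≤ δ := by
        rw [dist_eq_norm, ← AddCircle.coe_sub] at h1
        have hzz : ((a : ℝ) * y i - (b : ℝ) * y i) = -z := by
          rw [hz]; push_cast [Nat.cast_sub hab.le]; ring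
        rw [hzz, AddCircle.coe_neg, norm_neg] at h1
        exact h1
      rw [UnitAddCircle.norm_eq] at h2
      exact absurd h2 (not_le.2 (hi (round z)))
    intro a ha b hb hab
    simp only [Finset.coe_range, Set.mem_Iio] at ha hb
    rcases lt_or_gt_of_ne hab with h | h
    · exact key a b h hb
    · exact (key b a h ha).symm
  have hsum : ∑ p ∈ Finset.range (M + 1), volume (U p)
      = volume (⋃ p ∈ Finset.range (M + 1), U p) :=
    (measure_biUnion_finset hdisj fun p _ => hUmeas p).symm
  have hvol : ∀ p : ℕ, volume (U p) = ENNReal.ofReal δ ^ n := by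
    intro p
    rw [hU]
    rw [volume_pi_pi]
    simp only [AddCircle.volume_closedBall]
    rw [Finset.prod_const, Finset.card_univ, Fintype.card_fin]
    congr 1
    rw [min_eq_right (by linarith)]
    ring_nf
  have htotal : volume (⋃ p ∈ Finset.range (M + 1), U p) ≤ 1 := by
    have huniv : volume (Set.univ : Set (Fin n → UnitAddCircle)) = 1 := by
      rw [← Set.pi_univ Set.univ, volume_pi_pi]
      simp
    rw [← huniv]
    exact measure_mono (Set.subset_univ _)
  rw [← hsum] at htotal
  simp only [hvol, Finset.sum_const, Finset.card_range, nsmul_eq_mul] at htotal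
  have hconv : ((M + 1 : ℕ) : ℝ≥0∞) * ENNReal.ofReal δ ^ n
      = ENNReal.ofReal ((M + 1 : ℝ) * δ ^ n) := by
    rw [ENNReal.ofReal_mul (by positivity), ← ENNReal.ofReal_pow hδ0.le,
      ENNReal.ofReal_add (Nat.cast_nonneg M) zero_le_one, ENNReal.ofReal_natCast,
      ENNReal.ofReal_one]
    push_cast
    ring
  rw [hconv, ← ENNReal.ofReal_one, ENNReal.ofReal_le_ofReal_iff (by norm_num)] at htotal
  linarith

/-- Quantitative Dirichlet principle: for large `N` there is a set
`S ⊆ [0,1]^n` of measure at least `3/4` such that every `y ∈ S` admits an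
integer `p ∈ [4^{-n-1}N, N+2]` with `max_i ‖p yᵢ‖ ≤ N^{-1/n}`. -/
theorem dirichlet_large_denominator (n : ℕ) (hn : 1 ≤ n) :
    ∃ N₀ : ℝ, ∀ N : ℝ, N₀ ≤ N →
      ∃ S : Set (Fin n → ℝ), MeasurableSet S ∧
        S ⊆ {y | ∀ i, y i ∈ Set.Icc (0 : ℝ) 1} ∧
        3 / 4 ≤ MeasureTheory.volume S ∧
        ∀ y ∈ S, ∃ p : ℤ, 4 ^ (-(n : ℝ) - 1) * N ≤ (p : ℝ) ∧ (p : ℝ) ≤ N + 2 ∧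
          ∀ i, ∃ k : ℤ, |(p : ℝ) * y i - (k : ℝ)| ≤ N ^ (-(1 : ℝ) / n) := by
  refine ⟨2, fun N hN => ?_⟩
  have hN0 : (0 : ℝ) < N := by linarith
  have hn0 : (0 : ℝ) < (n : ℝ) := by exact_mod_cast hn
  set δ : ℝ := N ^ (-(1 : ℝ) / n) with hδdef
  have hδ0 : 0 < δ := Real.rpow_pos_of_pos hN0 _
  have hδlt1 : δ < 1 :=
    Real.rpow_lt_one_of_one_lt_of_neg (by linarith)
      (div_neg_of_neg_of_pos (by norm_num) hn0)
  have hδn : δ ^ n = N⁻¹ := by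
    rw [hδdef, ← Real.rpow_natCast (N ^ (-(1 : ℝ) / n)) n, ← Real.rpow_mul hN0.le]
    rw [show (-(1 : ℝ) / n) * n = -1 by field_simp]
    exact Real.rpow_neg_one N
  set P : ℕ := ⌊(4 : ℝ) ^ (-(n : ℝ) - 1) * N⌋₊ with hPdef
  have hx0 : (0 : ℝ) ≤ (4 : ℝ) ^ (-(n : ℝ) - 1) * N := by positivity
  set E : ℕ → Set ℝ := fun p =>
    Set.Icc (0 : ℝ) 1 ∩ ⋃ k ∈ Finset.range (p + 1),
      Set.Icc (((k : ℝ) - δ) / p) (((k : ℝ) + δ) / p) with hEdef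
  have hEmeas : ∀ p, MeasurableSet (E p) := fun p =>
    measurableSet_Icc.inter
      ((Finset.range (p + 1)).measurableSet_biUnion fun _ _ => measurableSet_Icc)
  set A : ℕ → Set (Fin n → ℝ) := fun p => Set.pi Set.univ fun _ => E p with hAdef
  have hAmeas : ∀ p, MeasurableSet (A p) := fun p =>
    MeasurableSet.univ_pi fun _ => hEmeas p
  set B : Set (Fin n → ℝ) := ⋃ p ∈ Finset.Icc 1 P, A p with hBdef
  have hBmeas : MeasurableSet B :=
    (Finset.Icc 1 P).measurableSet_biUnion fun p _ => hAmeas p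
  set cube : Set (Fin n → ℝ) := Set.pi Set.univ fun _ => Set.Icc (0 : ℝ) 1 with hcube
  have hcubemeas : MeasurableSet cube :=
    MeasurableSet.univ_pi fun _ => measurableSet_Icc
  refine ⟨cube \ B, hcubemeas.diff hBmeas, ?_, ?_, ?_⟩
  · intro y hy i
    exact Set.mem_pi.mp hy.1 i (Set.mem_univ i)
  · -- volume bound
    have hVE : ∀ p : ℕ, 1 ≤ p → volume (E p) ≤ ENNReal.ofReal (4 * δ) := by
      intro p hp
      have hp0 : (0 : ℝ) < p := by exact_mod_cast hp
      have hp1' : (1 : ℝ) ≤ p := by exact_mod_cast hp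
      calc volume (E p)
          ≤ volume (⋃ k ∈ Finset.range (p + 1),
              Set.Icc (((k : ℝ) - δ) / p) (((k : ℝ) + δ) / p)) :=
            measure_mono Set.inter_subset_right
        _ ≤ ∑ k ∈ Finset.range (p + 1),
              volume (Set.Icc (((k : ℝ) - δ) / p) (((k : ℝ) + δ) / p)) :=
            measure_biUnion_finset_le _ _
        _ = ∑ k ∈ Finset.range (p + 1), ENNReal.ofReal (2 * δ / p) := by
            refine Finset.sum_congr rfl fun k _ => ?_
            rw [Real.volume_Icc]
            congr 1
            field_simp
            ring
        _ = ((p + 1 : ℕ) : ℝ≥0∞) * ENNReal.ofReal (2 * δ / p) := by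
            rw [Finset.sum_const, Finset.card_range, nsmul_eq_mul]
        _ = ENNReal.ofReal (((p : ℝ) + 1) * (2 * δ / p)) := by
            rw [ENNReal.ofReal_mul (by positivity)]
            congr 1
            rw [ENNReal.ofReal_add (Nat.cast_nonneg p) zero_le_one,
              ENNReal.ofReal_natCast, ENNReal.ofReal_one]
            push_cast; ring
        _ ≤ ENNReal.ofReal (4 * δ) := by
            apply ENNReal.ofReal_le_ofReal
            have h1 : ((p : ℝ) + 1) * (2 * δ / p) ≤ (2 * p) * (2 * δ / p) := by
              apply mul_le_mul_of_nonneg_right _ (by positivity)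
              linarith
            have h2 : (2 * (p : ℝ)) * (2 * δ / p) = 4 * δ := by field_simp; ring
            linarith
    have hVA : ∀ p : ℕ, 1 ≤ p → volume (A p) ≤ ENNReal.ofReal (4 * δ) ^ n := by
      intro p hp
      rw [hAdef, volume_pi_pi, Finset.prod_const, Finset.card_univ, Fintype.card_fin]
      exact pow_le_pow_left₀ (zero_le) (hVE p hp) n
    have hVB : volume B ≤ ENNReal.ofReal (1 / 4) := by
      calc volume B ≤ ∑ p ∈ Finset.Icc 1 P, volume (A p) := measure_biUnion_finset_le _ _
        _ ≤ ∑ p ∈ Finset.Icc 1 P, ENNReal.ofReal (4 * δ) ^ n :=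
            Finset.sum_le_sum fun p hp => hVA p (Finset.mem_Icc.mp hp).1
        _ = ((Finset.Icc 1 P).card : ℝ≥0∞) * ENNReal.ofReal (4 * δ) ^ n := by
            rw [Finset.sum_const, nsmul_eq_mul]
        _ ≤ (P : ℝ≥0∞) * ENNReal.ofReal (4 * δ) ^ n := by
            apply mul_le_mul_left
            have : (Finset.Icc 1 P).card ≤ P := by
              rw [Nat.card_Icc]; omega
            exact_mod_cast Nat.cast_le.mpr this
        _ = ENNReal.ofReal ((P : ℝ) * (4 * δ) ^ n) := by
            rw [ENNReal.ofReal_mul (Nat.cast_nonneg P), ENNReal.ofReal_natCast,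
              ENNReal.ofReal_pow (by positivity)]
        _ ≤ ENNReal.ofReal (1 / 4) := by
            apply ENNReal.ofReal_le_ofReal
            have hP : (P : ℝ) ≤ (4 : ℝ) ^ (-(n : ℝ) - 1) * N := Nat.floor_le hx0
            have h4 : (4 * δ) ^ n = 4 ^ n * δ ^ n := mul_pow 4 δ n
            have h5 : ((4 : ℝ) ^ (-(n : ℝ) - 1) * N) * (4 ^ n * N⁻¹) = 1 / 4 := by
              have h6 : (4 : ℝ) ^ (-(n : ℝ) - 1) * 4 ^ n = 1 / 4 := by
                rw [← Real.rpow_natCast 4 n, ← Real.rpow_add (by norm_num : (0:ℝ) < 4)]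
                rw [show -(n : ℝ) - 1 + n = -1 by ring, Real.rpow_neg_one]
                norm_num
              field_simp at h6 ⊢
              nlinarith [h6]
            calc (P : ℝ) * (4 * δ) ^ n ≤ ((4 : ℝ) ^ (-(n : ℝ) - 1) * N) * (4 * δ) ^ n :=
                  mul_le_mul_of_nonneg_right hP (by positivity)
              _ = 1 / 4 := by rw [h4, hδn, h5]
    have hcubevol : volume cube = 1 := by
      rw [hcube, volume_pi_pi]
      simp
    have hsplit : volume cube ≤ volume (cube \ B) + volume B :=
      calc volume cube ≤ volume ((cube \ B) ∪ B) :=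
            measure_mono (by rw [Set.diff_union_self]; exact Set.subset_union_left)
        _ ≤ volume (cube \ B) + volume B := measure_union_le _ _
    rw [hcubevol] at hsplit
    have h14 : ENNReal.ofReal (1 / 4) = 1 / 4 := by
      rw [ENNReal.ofReal_div_of_pos (by norm_num)]
      norm_num
    have hfin : (1 : ℝ≥0∞) ≤ volume (cube \ B) + 1 / 4 :=
      le_trans hsplit (add_le_add le_rfl (h14 ▸ hVB))
    have hsub : (1 : ℝ≥0∞) - 1 / 4 = 3 / 4 :=
      ENNReal.sub_eq_of_eq_add (by norm_num) (by
        rw [ENNReal.div_add_div_same]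
        norm_num
        rw [ENNReal.div_self (by norm_num) (by norm_num)])
    calc (3 / 4 : ℝ≥0∞) = 1 - 1 / 4 := hsub.symm
      _ ≤ (volume (cube \ B) + 1 / 4) - 1 / 4 := tsub_le_tsub_right hfin _
      _ = volume (cube \ B) := ENNReal.add_sub_cancel_right (by norm_num)
  · -- approximation property
    intro y hy
    have hycube : y ∈ cube := hy.1
    have hyB : y ∉ B := hy.2
    have hM : 1 < (((⌊N⌋₊ + 1 : ℕ) : ℝ) + 1) * δ ^ n := by
      rw [hδn, ← div_eq_mul_inv, lt_div_iff₀ hN0, one_mul]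
      have := Nat.lt_floor_add_one N
      push_cast
      linarith
    obtain ⟨p, hp1, hpM, hpk⟩ := torus_pigeonhole y hδ0 hδlt1.le hM
    have hp0 : (0 : ℝ) < p := by exact_mod_cast hp1
    have hpP : P < p := by
      by_contra hle
      push_neg at hle
      apply hyB
      rw [hBdef]
      apply Set.mem_biUnion (Finset.mem_Icc.mpr ⟨hp1, hle⟩)
      rw [hAdef]
      rw [Set.mem_pi]
      intro i _
      have hyi : y i ∈ Set.Icc (0 : ℝ) 1 := Set.mem_pi.mp hycube i (Set.mem_univ i)
      obtain ⟨k, hk⟩ := hpk i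
      rw [abs_le] at hk
      have hpy0 : (0 : ℝ) ≤ (p : ℝ) * y i := mul_nonneg hp0.le hyi.1
      have hpy1 : (p : ℝ) * y i ≤ p := by
        nlinarith [hyi.2]
      have hklb : (-1 : ℝ) < (k : ℝ) := by linarith [hk.2]
      have hkub : (k : ℝ) < (p : ℝ) + 1 := by linarith [hk.1]
      have hk0 : 0 ≤ k := by
        have : (-1 : ℤ) < k := by exact_mod_cast hklb
        omega
      have hkp : k < (p : ℤ) + 1 := by exact_mod_cast hkub
      refine ⟨hyi, Set.mem_biUnion (show k.toNat ∈ Finset.range (p + 1) from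
        Finset.mem_range.mpr (by omega)) ?_⟩
      have hktr : ((k.toNat : ℕ) : ℝ) = (k : ℝ) := by
        exact_mod_cast Int.toNat_of_nonneg hk0
      rw [hktr]
      constructor
      · rw [div_le_iff₀ hp0]
        have := hk.1
        nlinarith
      · rw [le_div_iff₀ hp0]
        have := hk.2
        nlinarith
    refine ⟨(p : ℤ), ?_, ?_, ?_⟩
    · have h1 : (4 : ℝ) ^ (-(n : ℝ) - 1) * N < (P : ℝ) + 1 := Nat.lt_floor_add_one _
      have h2 : (P : ℝ) + 1 ≤ p := by exact_mod_cast hpP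
      push_cast
      linarith
    · have h1 : (p : ℝ) ≤ (⌊N⌋₊ : ℝ) + 1 := by exact_mod_cast hpM
      have h2 : (⌊N⌋₊ : ℝ) ≤ N := Nat.floor_le hN0.le
      push_cast
      linarith
    · intro i
      obtain ⟨k, hk⟩ := hpk i
      exact ⟨k, by exact_mod_cast hk⟩
end

section
/- Fix $n \ge 1$, $0 < \sigma < \frac{1}{n+2}$, and $\epsilon_2 > 0$. For all sufficiently large $R$ such that $R^{\sigma}$ is a positive integer, the set $V = \{ x \in [0,1]^n : \exists\, k \in \mathbb{Z}^n, \exists\, p \in \mathbb{Z},\ 4^{-n-1} R^{1-2\sigma} \le p \le R^{1-2\sigma},\ \max_{1\le i\le n} |x_i - R^{-\sigma} k_i / p| \le \epsilon_2 / R \}$ has Lebesgue measure $|V| \ge 3/4$. -/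
open MeasureTheory Set
open scoped ENNReal

private lemma pow_one_add_le_fourthirds (n : ℕ) (x : ℝ) (hx : 0 ≤ x) (h : (n:ℝ) * x ≤ 1/4) :
    (1 + x) ^ n ≤ 4/3 := by
  have h1 : (1 + x) ^ n ≤ Real.exp x ^ n :=
    pow_le_pow_left₀ (by linarith) (by linarith [Real.add_one_le_exp x]) n
  have h2 : Real.exp x ^ n = Real.exp ((n:ℝ) * x) := (Real.exp_nat_mul x n).symm
  have h3 : Real.exp ((n:ℝ) * x) ≤ Real.exp (1/4) := Real.exp_le_exp.mpr h
  have key : Real.exp (1/4) ^ 4 = Real.exp 1 := by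
    rw [← Real.exp_nat_mul]; norm_num
  have h4 : Real.exp (1/4) < 4/3 := by
    apply lt_of_pow_lt_pow_left₀ 4 (by norm_num)
    rw [key]
    nlinarith [Real.exp_one_lt_d9]
  linarith [h1, h2 ▸ h1]

private lemma dirichlet_aux {n : ℕ} (M : ℕ) (hM : 0 < M) (y : Fin n → ℝ)
    (q₁ q₂ : Fin (M ^ n + 1)) (hlt : (q₁:ℕ) < (q₂:ℕ))
    (heq : ∀ i, ⌊(M:ℝ) * Int.fract ((q₁:ℕ) * y i)⌋₊ = ⌊(M:ℝ) * Int.fract ((q₂:ℕ) * y i)⌋₊) :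
    ∃ p : ℕ, 0 < p ∧ p ≤ M ^ n ∧ ∀ i, ∃ m : ℤ, |(p : ℝ) * y i - (m:ℝ)| ≤ 1 / M := by
  have hMR : (0:ℝ) < M := by exact_mod_cast hM
  have hM1 : (1/(M:ℝ)) * M = 1 := by field_simp
  have hq2 := q₂.isLt
  refine ⟨(q₂:ℕ) - (q₁:ℕ), by omega, by omega, fun i => ?_⟩
  refine ⟨⌊((q₂:ℕ):ℝ) * y i⌋ - ⌊((q₁:ℕ):ℝ) * y i⌋, ?_⟩
  have hrw : (((q₂:ℕ) - (q₁:ℕ) : ℕ) : ℝ) * y i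
        - ((⌊((q₂:ℕ):ℝ) * y i⌋ - ⌊((q₁:ℕ):ℝ) * y i⌋ : ℤ):ℝ)
      = Int.fract (((q₂:ℕ):ℝ) * y i) - Int.fract (((q₁:ℕ):ℝ) * y i) := by
    rw [Nat.cast_sub hlt.le, Int.fract, Int.fract]; push_cast; ring
  rw [hrw]
  have hfi := heq i
  have h1 : (↑⌊(M:ℝ) * Int.fract (((q₂:ℕ):ℝ) * y i)⌋₊ : ℝ) ≤ (M:ℝ) * Int.fract (((q₂:ℕ):ℝ) * y i) :=
    Nat.floor_le (mul_nonneg hMR.le (Int.fract_nonneg _))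
  have h2 : (M:ℝ) * Int.fract (((q₂:ℕ):ℝ) * y i) < ↑⌊(M:ℝ) * Int.fract (((q₂:ℕ):ℝ) * y i)⌋₊ + 1 :=
    Nat.lt_floor_add_one _
  have h3 : (↑⌊(M:ℝ) * Int.fract (((q₁:ℕ):ℝ) * y i)⌋₊ : ℝ) ≤ (M:ℝ) * Int.fract (((q₁:ℕ):ℝ) * y i) :=
    Nat.floor_le (mul_nonneg hMR.le (Int.fract_nonneg _))
  have h4 : (M:ℝ) * Int.fract (((q₁:ℕ):ℝ) * y i) < ↑⌊(M:ℝ) * Int.fract (((q₁:ℕ):ℝ) * y i)⌋₊ + 1 :=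
    Nat.lt_floor_add_one _
  push_cast at h1 h2 h3 h4
  rw [hfi] at h3 h4
  rw [abs_le]
  constructor <;> nlinarith [h1, h2, h3, h4, hM1, hMR]

private lemma dirichlet {n : ℕ} (M : ℕ) (hM : 0 < M) (y : Fin n → ℝ) :
    ∃ p : ℕ, 0 < p ∧ p ≤ M ^ n ∧ ∀ i, ∃ m : ℤ, |(p : ℝ) * y i - (m:ℝ)| ≤ 1 / M := by
  have hMR : (0:ℝ) < M := by exact_mod_cast hM
  set f : Fin (M ^ n + 1) → (Fin n → Fin M) := fun q i =>
    ⟨⌊(M:ℝ) * Int.fract ((q:ℕ) * y i)⌋₊, by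
      rw [Nat.floor_lt (mul_nonneg hMR.le (Int.fract_nonneg _))]
      have := Int.fract_lt_one ((q:ℕ) * y i)
      nlinarith [Int.fract_nonneg ((q:ℕ) * y i)]⟩ with hf
  obtain ⟨q₁, q₂, hne, heq⟩ := Fintype.exists_ne_map_eq_of_card_lt f (by
    simp [Fintype.card_fun])
  have heq' : ∀ i, ⌊(M:ℝ) * Int.fract ((q₁:ℕ) * y i)⌋₊ = ⌊(M:ℝ) * Int.fract ((q₂:ℕ) * y i)⌋₊ := by
    intro i
    have := congrFun heq i
    simpa [hf, Fin.ext_iff] using this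
  have hne' : (q₁:ℕ) ≠ (q₂:ℕ) := fun h => hne (Fin.ext h)
  rcases lt_or_gt_of_ne hne' with h | h
  · exact dirichlet_aux M hM y q₁ q₂ h heq'
  · exact dirichlet_aux M hM y q₂ q₁ h (fun i => (heq' i).symm)

private lemma mem_cover {N : ℕ} (hN : 0 < N) {δ t : ℝ} (hδ1 : δ < 1)
    (ht : t ∈ Icc (0:ℝ) 1) (m : ℤ) (hm : |(N:ℝ)*t - m| ≤ δ) :
    t ∈ ⋃ j ∈ Finset.range (N+1), Icc (((j:ℝ) - δ)/N) (((j:ℝ) + δ)/N) := by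
  have hNR : (0:ℝ) < N := by exact_mod_cast hN
  obtain ⟨ht0, ht1⟩ := ht
  rw [abs_le] at hm
  have hm0 : 0 ≤ m := by
    by_contra h
    push_neg at h
    have : (m:ℝ) ≤ -1 := by exact_mod_cast Int.le_sub_one_of_lt h
    nlinarith
  have hmN : m ≤ N := by
    by_contra h
    push_neg at h
    have : ((N:ℤ):ℝ) + 1 ≤ (m:ℝ) := by exact_mod_cast Int.add_one_le_of_lt h
    push_cast at this
    nlinarith
  simp only [Set.mem_iUnion, Finset.mem_range]
  refine ⟨m.toNat, by omega, ?_, ?_⟩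
  · rw [div_le_iff₀ hNR]
    have h' : ((m.toNat : ℕ) : ℝ) = (m:ℝ) := by
      exact_mod_cast congrArg (Int.cast : ℤ → ℝ) (Int.toNat_of_nonneg hm0)
    rw [h']; linarith [hm.1, hm.2]
  · rw [le_div_iff₀ hNR]
    have h' : ((m.toNat : ℕ) : ℝ) = (m:ℝ) := by
      exact_mod_cast congrArg (Int.cast : ℤ → ℝ) (Int.toNat_of_nonneg hm0)
    rw [h']; linarith [hm.1, hm.2]

private lemma cover_meas (N : ℕ) (δ : ℝ) (hδ : 0 ≤ δ) :
    volume (⋃ j ∈ Finset.range (N+1), Icc (((j:ℝ) - δ)/N) (((j:ℝ) + δ)/N))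
      ≤ ENNReal.ofReal (((N:ℝ)+1) * (2*δ/N)) := by
  refine le_trans (measure_biUnion_finset_le _ _) ?_
  have hvol : ∀ j ∈ Finset.range (N+1),
      volume (Icc (((j:ℝ) - δ)/N) (((j:ℝ) + δ)/N)) = ENNReal.ofReal (2*δ/N) := by
    intro j _
    rw [Real.volume_Icc]
    congr 1
    rw [div_sub_div_same]
    ring_nf
  rw [Finset.sum_congr rfl hvol, Finset.sum_const, Finset.card_range, nsmul_eq_mul,
    ← ENNReal.ofReal_natCast, ← ENNReal.ofReal_mul (by positivity)]
  push_cast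
  exact le_refl _

private lemma rpow_threshold {R K b : ℝ} (hK : 1 ≤ K) (hb : 0 < b) (hR : K ^ (1/b) ≤ R) :
    K ≤ R ^ b := by
  have hK0 : (0:ℝ) ≤ K := by linarith
  have h0 : (0:ℝ) ≤ K ^ (1/b) := Real.rpow_nonneg hK0 _
  have : K = (K ^ (1/b)) ^ b := by
    rw [← Real.rpow_mul hK0, one_div, inv_mul_cancel₀ hb.ne', Real.rpow_one]
  rw [this]
  exact Real.rpow_le_rpow h0 hR hb.le

set_option maxHeartbeats 2000000 in
/-- For `0 < σ < 1/(n+2)` and `ε₂ > 0`, for all sufficiently large `R` with `R^σ` a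
positive integer, the set `V` of `x ∈ [0,1]^n` admitting an approximation
`max_i |x_i - R^{-σ} k_i / p| ≤ ε₂/R` with `4^{-n-1} R^{1-2σ} ≤ p ≤ R^{1-2σ}`
has Lebesgue measure at least `3/4`. -/
theorem measure_V_ge (n : ℕ) (hn : 1 ≤ n) (σ : ℝ) (hσ0 : 0 < σ)
    (hσ : σ < 1 / (n + 2)) (ε₂ : ℝ) (hε₂ : 0 < ε₂) :
    ∃ R₀ : ℝ, ∀ R : ℝ, R₀ ≤ R → (∃ m : ℕ, 0 < m ∧ R ^ σ = (m : ℝ)) →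
      3 / 4 ≤ MeasureTheory.volume
        {x : Fin n → ℝ | (∀ i, x i ∈ Set.Icc (0 : ℝ) 1) ∧
          ∃ k : Fin n → ℤ, ∃ p : ℤ,
            4 ^ (-(n : ℝ) - 1) * R ^ (1 - 2 * σ) ≤ (p : ℝ) ∧
            (p : ℝ) ≤ R ^ (1 - 2 * σ) ∧
            ∀ i, |x i - R ^ (-σ) * (k i : ℝ) / (p : ℝ)| ≤ ε₂ / R} := by
  have hn1 : (1:ℝ) ≤ n := by exact_mod_cast hn
  have hn0 : (0:ℝ) < n := by linarith
  have hn2 : (0:ℝ) < (n:ℝ) + 2 := by linarith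
  have hσn2 : σ * ((n:ℝ) + 2) < 1 := by
    rw [lt_div_iff₀ hn2] at hσ; linarith
  have h12σ : 0 < 1 - 2*σ := by
    have hmul : σ*1 ≤ σ*(n:ℝ) := mul_le_mul_of_nonneg_left hn1 hσ0.le
    linarith only [hσn2, hmul, hσ0]
  set β := (1 - 2*σ)/(n:ℝ) - σ with hβ
  have hβpos : 0 < β := by
    rw [hβ, sub_pos, lt_div_iff₀ hn0]; linarith only [hσn2]
  set C : ℝ := 4^(n+1)/ε₂ + 4*(n:ℝ) + 1 with hC
  have hC1 : 1 ≤ C := by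
    have h1 : (0:ℝ) ≤ 4^(n+1)/ε₂ := by positivity
    rw [hC]; linarith only [h1, hn1]
  have h4n1 : (1:ℝ) ≤ 4*(n:ℝ) := by linarith
  refine ⟨max 1 (max ((4*(n:ℝ)) ^ (1/σ)) (C ^ (1/β))), fun R hR hex => ?_⟩
  obtain ⟨m₀, hm₀pos, hRσ⟩ := hex
  have hR1 : (1:ℝ) ≤ R := le_trans (le_max_left _ _) hR
  have hRpos : (0:ℝ) < R := by linarith
  have hm₀1 : (1:ℝ) ≤ (m₀:ℝ) := by
    rw [← hRσ]
    calc (1:ℝ) = 1 ^ σ := (Real.one_rpow σ).symm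
    _ ≤ R ^ σ := Real.rpow_le_rpow (by norm_num) hR1 hσ0.le
  have hm₀R : (0:ℝ) < (m₀:ℝ) := by linarith
  -- thresholds
  have hA : 4*(n:ℝ) ≤ (m₀:ℝ) := by
    rw [← hRσ]
    exact rpow_threshold h4n1 hσ0
      (le_trans (le_trans (le_max_left _ _) (le_max_right 1 _)) hR)
  have hRβ : C ≤ R ^ β := rpow_threshold hC1 hβpos
      (le_trans (le_trans (le_max_right _ _) (le_max_right 1 _)) hR)
  -- Q and M
  set Q : ℝ := R ^ (1 - 2*σ) with hQ
  have hQpos : 0 < Q := Real.rpow_pos_of_pos hRpos _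
  have hQn : Q ^ (1/(n:ℝ)) = R ^ ((1 - 2*σ) * (1/(n:ℝ))) :=
    (Real.rpow_mul hRpos.le _ _).symm
  have hkey : 4*(n:ℝ) + 1 + 4^(n+1) * (m₀:ℝ) / ε₂ ≤ Q ^ (1/(n:ℝ)) := by
    rw [hQn]
    have hsum : (1 - 2*σ) * (1/(n:ℝ)) = σ + β := by
      rw [hβ]; field_simp; ring
    rw [hsum, Real.rpow_add hRpos, hRσ]
    have hstep : 4*(n:ℝ) + 1 + 4^(n+1) * (m₀:ℝ) / ε₂ ≤ (m₀:ℝ) * C := by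
      have e1 : (m₀:ℝ) * C = 4^(n+1) * (m₀:ℝ)/ε₂ + (m₀:ℝ)*(4*(n:ℝ) + 1) := by
        rw [hC]; ring
      rw [e1]
      have hmul : 1*(4*(n:ℝ)+1) ≤ (m₀:ℝ)*(4*(n:ℝ)+1) :=
        mul_le_mul_of_nonneg_right hm₀1 (by linarith only [hn1])
      linarith only [hmul]
    calc 4*(n:ℝ) + 1 + 4^(n+1) * (m₀:ℝ) / ε₂ ≤ (m₀:ℝ) * C := hstep
    _ ≤ (m₀:ℝ) * R ^ β := mul_le_mul_of_nonneg_left hRβ hm₀R.le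
  set M : ℕ := ⌊Q ^ (1/(n:ℝ))⌋₊ with hM
  have hMlt : Q ^ (1/(n:ℝ)) < (M:ℝ) + 1 := Nat.lt_floor_add_one _
  have hX0 : (0:ℝ) ≤ 4^(n+1) * (m₀:ℝ) / ε₂ := by positivity
  have hMge : 4*(n:ℝ) + 4^(n+1) * (m₀:ℝ) / ε₂ ≤ (M:ℝ) := by linarith
  have hM4n : 4*(n:ℝ) ≤ (M:ℝ) := by linarith
  have hMε : 4^(n+1) * (m₀:ℝ) / ε₂ ≤ (M:ℝ) := by linarith
  have hMR : (0:ℝ) < (M:ℝ) := by linarith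
  have hMpos : 0 < M := by exact_mod_cast hMR
  have hMQ : ((M:ℝ)) ^ n ≤ Q := by
    have h1 : (M:ℝ) ≤ Q ^ (1/(n:ℝ)) := Nat.floor_le (by positivity)
    calc ((M:ℝ)) ^ n ≤ (Q ^ (1/(n:ℝ))) ^ n := pow_le_pow_left₀ hMR.le h1 n
    _ = Q := by
      rw [← Real.rpow_natCast (Q ^ (1/(n:ℝ))) n, ← Real.rpow_mul hQpos.le]
      rw [one_div, inv_mul_cancel₀ (by exact_mod_cast hn0.ne'), Real.rpow_one]
  have hQM1 : Q ≤ ((M:ℝ) + 1) ^ n := by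
    have h1 : (0:ℝ) ≤ Q ^ (1/(n:ℝ)) := by positivity
    calc Q = (Q ^ (1/(n:ℝ))) ^ n := by
          rw [← Real.rpow_natCast (Q ^ (1/(n:ℝ))) n, ← Real.rpow_mul hQpos.le]
          rw [one_div, inv_mul_cancel₀ (by exact_mod_cast hn0.ne'), Real.rpow_one]
    _ ≤ ((M:ℝ) + 1) ^ n := pow_le_pow_left₀ h1 hMlt.le n
  set δ : ℝ := 1/(M:ℝ) with hδ
  have hδpos : 0 < δ := by positivity
  have hδ1 : δ < 1 := by
    rw [hδ, div_lt_one hMR]; linarith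
  set P₀ : ℝ := 4 ^ (-(n : ℝ) - 1) * Q with hP₀
  have hP₀eq : P₀ = Q / 4^(n+1) := by
    rw [hP₀]
    have e1 : (-(n:ℝ) - 1) = -((n:ℝ)+1) := by ring
    rw [e1, Real.rpow_neg (by norm_num : (0:ℝ) ≤ 4)]
    have e2 : (4:ℝ) ^ ((n:ℝ)+1) = 4^(n+1) := by
      rw [← Real.rpow_natCast 4 (n+1)]; push_cast; ring_nf
    rw [e2]; ring
  have hP₀pos : 0 < P₀ := by
    rw [hP₀eq]; positivity
  -- the bad set
  set K : ℕ := ⌊P₀⌋₊ with hK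
  set U : ℕ → Set ℝ := fun p =>
    ⋃ j ∈ Finset.range (p*m₀+1),
      Icc (((j:ℝ) - δ)/((p*m₀ : ℕ):ℝ)) (((j:ℝ) + δ)/((p*m₀ : ℕ):ℝ)) with hU
  set B : Set (Fin n → ℝ) := {x | (∀ i, x i ∈ Icc (0:ℝ) 1) ∧
      ∃ p : ℕ, 0 < p ∧ (p:ℝ) ≤ P₀ ∧ ∀ i, ∃ m : ℤ, |(p:ℝ) * ((m₀:ℝ) * x i) - (m:ℝ)| ≤ δ}
    with hB
  have hBsub : B ⊆ ⋃ p ∈ Finset.Icc 1 K, Set.pi univ (fun _ : Fin n => U p) := by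
    rintro x ⟨hbox, p, hp0, hpP, hx⟩
    simp only [Set.mem_iUnion, Finset.mem_Icc]
    refine ⟨p, ⟨hp0, Nat.le_floor hpP⟩, ?_⟩
    rw [Set.mem_pi]
    intro i _
    obtain ⟨m, hm⟩ := hx i
    refine mem_cover (by positivity) hδ1 (hbox i) m ?_
    have e1 : ((p*m₀ : ℕ):ℝ) * x i = (p:ℝ) * ((m₀:ℝ) * x i) := by push_cast; ring
    rw [e1]
    exact hm
  -- measure of bad set
  set E : ℝ := 2*δ*(1 + 1/(m₀:ℝ)) with hE
  have hEpos : 0 < E := by positivity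
  have hUmeas : ∀ p : ℕ, 0 < p → volume (U p) ≤ ENNReal.ofReal E := by
    intro p hp
    refine le_trans (cover_meas (p*m₀) δ hδpos.le) (ENNReal.ofReal_le_ofReal ?_)
    have hpm : (1:ℝ) ≤ ((p*m₀:ℕ):ℝ) := by
      have : 1 ≤ p * m₀ := Nat.one_le_iff_ne_zero.mpr (by positivity)
      exact_mod_cast this
    have hm₀le : (m₀:ℝ) ≤ ((p*m₀:ℕ):ℝ) := by
      have : m₀ ≤ p * m₀ := Nat.le_mul_of_pos_left m₀ hp
      exact_mod_cast this
    have h0 : (0:ℝ) < ((p*m₀:ℕ):ℝ) := by linarith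
    rw [hE]
    have e1 : (((p*m₀:ℕ):ℝ)+1) * (2*δ/((p*m₀:ℕ):ℝ)) = 2*δ*(1 + 1/((p*m₀:ℕ):ℝ)) := by
      field_simp
    rw [e1]
    have h2 : 1/((p*m₀:ℕ):ℝ) ≤ 1/(m₀:ℝ) :=
      div_le_div_of_nonneg_left (by norm_num) hm₀R hm₀le
    gcongr
  have hBmeas : volume B ≤ ENNReal.ofReal (P₀ * E^n) := by
    refine le_trans (measure_mono hBsub) ?_
    refine le_trans (measure_biUnion_finset_le _ _) ?_
    have hterm : ∀ p ∈ Finset.Icc 1 K,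
        volume (Set.pi univ (fun _ : Fin n => U p)) ≤ ENNReal.ofReal (E^n) := by
      intro p hp
      rw [Finset.mem_Icc] at hp
      rw [volume_pi_pi, Finset.prod_const, Finset.card_univ, Fintype.card_fin,
        ENNReal.ofReal_pow hEpos.le]
      exact pow_le_pow_left' (hUmeas p hp.1) n
    refine le_trans (Finset.sum_le_sum hterm) ?_
    rw [Finset.sum_const, Nat.card_Icc, nsmul_eq_mul]
    have hcard : ((K + 1 - 1 : ℕ):ℝ≥0∞) = (K:ℝ≥0∞) := by norm_num
    rw [hcard, ← ENNReal.ofReal_natCast, ← ENNReal.ofReal_mul (by positivity)]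
    apply ENNReal.ofReal_le_ofReal
    have hKP : (K:ℝ) ≤ P₀ := Nat.floor_le hP₀pos.le
    exact mul_le_mul_of_nonneg_right hKP (pow_nonneg hEpos.le n)
  -- numeric bound P₀ * E^n ≤ 1/4
  have hc₁ : (1 + 1/(M:ℝ))^n ≤ 4/3 := by
    apply pow_one_add_le_fourthirds n _ (by positivity)
    rw [mul_one_div, div_le_iff₀ hMR]
    linarith only [hM4n, hn1]
  have hc₂ : (1 + 1/(m₀:ℝ))^n ≤ 4/3 := by
    apply pow_one_add_le_fourthirds n _ (by positivity)
    rw [mul_one_div, div_le_iff₀ hm₀R]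
    linarith only [hA, hn1]
  have hQMc : Q ≤ (M:ℝ)^n * (1 + 1/(M:ℝ))^n := by
    have e1 : ((M:ℝ) + 1)^n = (M:ℝ)^n * (1 + 1/(M:ℝ))^n := by
      rw [← mul_pow]
      congr 1
      field_simp
    linarith [hQM1, e1 ▸ hQM1]
  have hnum : P₀ * E^n ≤ 1/4 := by
    set X : ℝ := 2^n with hXd
    set A : ℝ := (M:ℝ)^n with hAd
    set b : ℝ := (1 + 1/(M:ℝ))^n with hbd
    set c : ℝ := (1 + 1/(m₀:ℝ))^n with hcd
    have hX2 : (2:ℝ) ≤ X := by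
      rw [hXd]
      calc (2:ℝ) = 2^1 := (pow_one 2).symm
      _ ≤ 2^n := pow_le_pow_right₀ (by norm_num) hn
    have hXpos : (0:ℝ) < X := by linarith
    have hApos : (0:ℝ) < A := by rw [hAd]; positivity
    have hbpos : (0:ℝ) < b := by rw [hbd]; positivity
    have hcpos : (0:ℝ) < c := by rw [hcd]; positivity
    have h4X : (4:ℝ)^(n+1) = 4 * (X * X) := by
      rw [hXd, ← mul_pow, pow_succ]; norm_num; ring
    have hkey2 : P₀ * E^n = Q * c * X / (4 * X * X * A) := by
      rw [hP₀eq, hE, mul_pow, mul_pow, hδ, div_pow, one_pow, h4X]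
      rw [← hXd, ← hAd, ← hcd]
      field_simp
    rw [hkey2, div_le_iff₀ (by positivity)]
    have s1 : Q * c * X ≤ (A * b) * c * X :=
      mul_le_mul_of_nonneg_right (mul_le_mul_of_nonneg_right hQMc hcpos.le) hXpos.le
    have s3 : b * c ≤ 16/9 := by
      have hmul : b * c ≤ (4/3)*(4/3) :=
        mul_le_mul hc₁ hc₂ hcpos.le (by norm_num)
      linarith only [hmul]
    have s5 : A * X * (b*c) ≤ A * X * (16/9) :=
      mul_le_mul_of_nonneg_left s3 (by positivity)
    have s6 : A * X * (16/9) ≤ 1/4 * (4 * X * X * A) := by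
      have h9 : 0 ≤ (X - 16/9) * (A * X) := by
        apply mul_nonneg (by linarith) (by positivity)
      linarith only [h9]
    linarith only [s1, s5, s6]
  -- bad set measure ≤ 1/4 in ENNReal
  have hB14 : volume B ≤ 1/4 := by
    refine le_trans hBmeas ?_
    calc ENNReal.ofReal (P₀ * E^n) ≤ ENNReal.ofReal (1/4) := ENNReal.ofReal_le_ofReal hnum
    _ = 1/4 := by
      rw [ENNReal.ofReal_div_of_pos (by norm_num)]; norm_num
  -- good direction
  have hGood : Set.pi univ (fun _ : Fin n => Icc (0:ℝ) 1) \ B ⊆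
      {x : Fin n → ℝ | (∀ i, x i ∈ Set.Icc (0 : ℝ) 1) ∧
        ∃ k : Fin n → ℤ, ∃ p : ℤ, P₀ ≤ (p : ℝ) ∧ (p : ℝ) ≤ Q ∧
          ∀ i, |x i - R ^ (-σ) * (k i : ℝ) / (p : ℝ)| ≤ ε₂ / R} := by
    rintro x ⟨hx, hxB⟩
    rw [Set.mem_pi] at hx
    have hbox : ∀ i, x i ∈ Icc (0:ℝ) 1 := fun i => hx i (mem_univ i)
    obtain ⟨p, hp0, hpMn, happ⟩ := dirichlet M hMpos (fun i => (m₀:ℝ) * x i)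
    choose m hm using happ
    have hm' : ∀ i, |(p:ℝ) * ((m₀:ℝ) * x i) - ((m i):ℝ)| ≤ δ := fun i => hm i
    have hpP : P₀ < (p:ℝ) := by
      by_contra hcon
      push_neg at hcon
      exact hxB ⟨hbox, p, hp0, hcon, fun i => ⟨m i, hm' i⟩⟩
    have hppos : (0:ℝ) < (p:ℝ) := by exact_mod_cast hp0
    refine ⟨hbox, m, (p:ℤ), ?_, ?_, ?_⟩
    · push_cast
      linarith
    · have h1 : (p:ℝ) ≤ ((M:ℝ))^n := by exact_mod_cast hpMn
      push_cast
      linarith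
    · intro i
      have hRns : R ^ (-σ) = ((m₀:ℝ))⁻¹ := by
        rw [Real.rpow_neg hRpos.le, hRσ]
      have heq2 : x i - R ^ (-σ) * ((m i):ℝ) / ((p:ℤ):ℝ)
          = ((p:ℝ) * ((m₀:ℝ) * x i) - ((m i):ℝ)) / ((p:ℝ) * (m₀:ℝ)) := by
        rw [hRns]
        push_cast
        field_simp
      rw [heq2, abs_div, abs_of_pos (mul_pos hppos hm₀R)]
      rw [div_le_iff₀ (mul_pos hppos hm₀R)]
      have hfinal : δ ≤ ε₂/R * ((p:ℝ)*(m₀:ℝ)) := by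
        rw [hδ, div_le_iff₀ hMR, div_mul_eq_mul_div, div_mul_eq_mul_div,
          le_div_iff₀ hRpos, one_mul]
        -- R ≤ ε₂ * (p * m₀) * M
        have t0 : 4^(n+1) * (m₀:ℝ) ≤ ε₂ * M := by
          rw [div_le_iff₀ hε₂] at hMε
          linarith only [hMε]
        have t0' : Q ≤ 4^(n+1) * (p:ℝ) := by
          rw [hP₀eq, div_lt_iff₀ (by positivity)] at hpP
          linarith only [hpP]
        have hQR2 : Q * ((m₀:ℝ)*(m₀:ℝ)) = R := by
          rw [hQ, ← hRσ, ← Real.rpow_add hRpos, ← Real.rpow_add hRpos]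
          rw [show (1 - 2*σ + (σ + σ)) = 1 by ring, Real.rpow_one]
        have t1 := mul_le_mul_of_nonneg_right t0 (mul_pos hppos hm₀R).le
        have t2 := mul_le_mul_of_nonneg_right t0' (mul_nonneg hm₀R.le hm₀R.le)
        linarith only [t1, t2, hQR2]
      calc |(p:ℝ) * ((m₀:ℝ) * x i) - ((m i):ℝ)| ≤ δ := hm' i
      _ ≤ ε₂/R * ((p:ℝ)*(m₀:ℝ)) := hfinal
  -- conclude
  have hBox : volume (Set.pi univ (fun _ : Fin n => Icc (0:ℝ) 1)) = 1 := by
    rw [volume_pi_pi]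
    simp [Real.volume_Icc]
  have hdiff : (3:ℝ≥0∞)/4 ≤ volume (Set.pi univ (fun _ : Fin n => Icc (0:ℝ) 1) \ B) := by
    refine le_trans ?_ le_measure_diff
    rw [hBox]
    have e1 : (1:ℝ≥0∞) - 1/4 = 3/4 := by
      rw [ENNReal.sub_eq_of_eq_add (by norm_num)]
      rw [ENNReal.div_add_div_same]
      norm_num
      rw [ENNReal.div_self (by norm_num) (by norm_num)]
    calc (3:ℝ≥0∞)/4 = 1 - 1/4 := e1.symm
    _ ≤ 1 - volume B := tsub_le_tsub_left hB14 1
  exact le_trans hdiff (measure_mono hGood)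
end

section
/- Let $n \ge 1$, $0 < \sigma < \frac{1}{n+2}$, and $\epsilon_2 > 0$. Define $X = (R^{\sigma-1}\mathbb{Z}^n + B(0,\epsilon_2/R)) \cap \{x : 4^{-n-2} < |x| < 2\sqrt{n}\}$ and $T = (R^{2\sigma-1}\mathbb{Z}) \cap (4^{-n-1}, 1)$. Then for all sufficiently large $R$ such that $R^{\sigma}$ is a positive integer, the set $\frac{XR}{T} = \{xR/t : x \in X, t \in T\}$ satisfies $\left|\frac{XR}{T} \cap B(0,R)\right| \ge c_n R^n$ for a constant $c_n > 0$ depending only on $n$ (and $\epsilon_2, \sigma$). -/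
open MeasureTheory Filter
set_option maxHeartbeats 2000000


lemma abs_sub_lt_one_of_floor_eq {a b : ℝ} (h : ⌊a⌋ = ⌊b⌋) : |a - b| < 1 := by
  have ha1 := Int.floor_le a
  have ha2 := Int.lt_floor_add_one a
  have hb1 := Int.floor_le b
  have hb2 := Int.lt_floor_add_one b
  rw [h] at ha1 ha2
  rw [abs_sub_lt_iff]
  constructor <;> linarith

lemma dirichlet_sim (n Q : ℕ) (hQ : 0 < Q) (θ : Fin n → ℝ) :
    ∃ q : ℕ, 1 ≤ q ∧ q ≤ Q ^ n ∧ ∀ i, ∃ m : ℤ, |(q : ℝ) * θ i - m| ≤ 1 / Q := by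
  have hQR : (0:ℝ) < Q := Nat.cast_pos.2 hQ
  set f : Fin (Q ^ n + 1) → (Fin n → Fin Q) := fun j i =>
    ⟨(⌊(Q : ℝ) * Int.fract ((j : ℝ) * θ i)⌋).toNat, by
      have h0 : (0:ℝ) ≤ Int.fract ((j : ℝ) * θ i) := Int.fract_nonneg _
      have h1 : Int.fract ((j : ℝ) * θ i) < 1 := Int.fract_lt_one _
      have hlt : (⌊(Q : ℝ) * Int.fract ((j : ℝ) * θ i)⌋) < (Q : ℤ) := by
        apply Int.floor_lt.2; push_cast; nlinarith
      omega⟩ with hf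
  have key : ∀ a b : Fin (Q ^ n + 1), (a : ℕ) < (b : ℕ) → f a = f b →
      ∃ q : ℕ, 1 ≤ q ∧ q ≤ Q ^ n ∧ ∀ i, ∃ m : ℤ, |(q : ℝ) * θ i - m| ≤ 1 / Q := by
    intro a b hab he
    refine ⟨(b : ℕ) - (a : ℕ), by omega, by have := b.2; omega, fun i => ?_⟩
    have hei : ((f a i : Fin Q) : ℕ) = ((f b i : Fin Q) : ℕ) := by rw [he]
    have hfl : ⌊(Q : ℝ) * Int.fract ((a : ℝ) * θ i)⌋ = ⌊(Q : ℝ) * Int.fract ((b : ℝ) * θ i)⌋ := by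
      have h0a : (0:ℤ) ≤ ⌊(Q : ℝ) * Int.fract ((a : ℝ) * θ i)⌋ :=
        Int.floor_nonneg.2 (mul_nonneg hQR.le (Int.fract_nonneg _))
      have h0b : (0:ℤ) ≤ ⌊(Q : ℝ) * Int.fract ((b : ℝ) * θ i)⌋ :=
        Int.floor_nonneg.2 (mul_nonneg hQR.le (Int.fract_nonneg _))
      simp only [hf] at hei
      omega
    have habs : |(Q : ℝ) * Int.fract ((a : ℝ) * θ i) - (Q : ℝ) * Int.fract ((b : ℝ) * θ i)| < 1 :=
      abs_sub_lt_one_of_floor_eq hfl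
    refine ⟨⌊(b : ℝ) * θ i⌋ - ⌊(a : ℝ) * θ i⌋, ?_⟩
    have hq : ((((b : ℕ) - (a : ℕ) : ℕ) : ℝ)) = (b : ℝ) - (a : ℝ) := by
      push_cast [Nat.cast_sub hab.le]; ring
    have expand : ((((b : ℕ) - (a : ℕ) : ℕ) : ℝ)) * θ i - ((⌊(b : ℝ) * θ i⌋ - ⌊(a : ℝ) * θ i⌋ : ℤ) : ℝ)
        = Int.fract ((b : ℝ) * θ i) - Int.fract ((a : ℝ) * θ i) := by
      rw [hq]
      push_cast
      have e1 := Int.floor_add_fract ((a : ℝ) * θ i)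
      have e2 := Int.floor_add_fract ((b : ℝ) * θ i)
      nlinarith [e1, e2]
    rw [expand]
    rw [abs_sub_comm] at habs
    rw [abs_sub_lt_iff] at habs
    rw [abs_sub_le_iff]
    constructor <;> rw [le_div_iff₀ hQR] <;> nlinarith [habs.1, habs.2]
  obtain ⟨a, b, hab, habe⟩ := Fintype.exists_ne_map_eq_of_card_lt f (by
    simp [Fintype.card_fun])
  rcases Nat.lt_or_ge (a : ℕ) (b : ℕ) with h | h
  · exact key a b h habe
  · have h' : (b : ℕ) < (a : ℕ) := by
      rcases Nat.lt_or_ge (b:ℕ) (a:ℕ) with h2 | h2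
      · exact h2
      · exact absurd (Fin.ext (le_antisymm h2 h)) hab
    exact key b a h' habe.symm


lemma badline (α r L : ℝ) (hα : 0 < α) (hr : 0 < r) (hr1 : r ≤ 1) (hL : 0 ≤ L) :
    volume {s : ℝ | s ∈ Set.Ioo L (2*L) ∧ ∃ m : ℤ, |α*s - m| ≤ r}
      ≤ ENNReal.ofReal (2*r*L + 8*r/α) := by
  set m1 := ⌈α*L - r⌉ with hm1
  set m2 := ⌊α*(2*L) + r⌋ with hm2
  have hsub : {s : ℝ | s ∈ Set.Ioo L (2*L) ∧ ∃ m : ℤ, |α*s - m| ≤ r}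
      ⊆ ⋃ m ∈ Finset.Icc m1 m2, Set.Icc (((m:ℝ) - r)/α) (((m:ℝ)+r)/α) := by
    rintro s ⟨⟨hs1, hs2⟩, m, hm⟩
    rw [abs_sub_le_iff] at hm
    have hb1 : α*s - (m:ℝ) ≤ r := hm.1
    have hb2 : (m:ℝ) - α*s ≤ r := hm.2
    apply Set.mem_iUnion₂.2
    refine ⟨m, ?_, ?_⟩
    · rw [Finset.mem_Icc]
      constructor
      · rw [hm1, Int.ceil_le]
        nlinarith
      · rw [hm2, Int.le_floor]
        nlinarith
    · constructor
      · rw [div_le_iff₀ hα]; nlinarith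
      · rw [le_div_iff₀ hα]; nlinarith
  have hcard : ((Finset.Icc m1 m2).card : ℝ) ≤ α*L + 4 := by
    rcases le_or_gt m1 m2 with h | h
    · rw [Int.card_Icc]
      have hnn : (0:ℤ) ≤ m2 + 1 - m1 := by omega
      have f1 : (m2:ℝ) ≤ α*(2*L) + r := Int.floor_le _
      have f2 : α*L - r ≤ (m1:ℝ) := Int.le_ceil _
      have hc := Int.toNat_of_nonneg hnn
      have hcR : (((m2 + 1 - m1).toNat : ℕ) : ℝ) = ((m2:ℝ) + 1 - (m1:ℝ)) := by
        rw [← Int.cast_natCast (R := ℝ), hc]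
        push_cast
        ring
      rw [hcR]
      nlinarith
    · rw [Finset.Icc_eq_empty (by omega)]
      simp
      nlinarith
  calc volume {s : ℝ | s ∈ Set.Ioo L (2*L) ∧ ∃ m : ℤ, |α*s - m| ≤ r}
      ≤ volume (⋃ m ∈ Finset.Icc m1 m2, Set.Icc (((m:ℝ) - r)/α) (((m:ℝ)+r)/α)) :=
        measure_mono hsub
    _ ≤ ∑ m ∈ Finset.Icc m1 m2, volume (Set.Icc (((m:ℝ) - r)/α) (((m:ℝ)+r)/α)) :=
        measure_biUnion_finset_le _ _
    _ = ∑ _m ∈ Finset.Icc m1 m2, ENNReal.ofReal (2*r/α) := by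
        apply Finset.sum_congr rfl
        intro m _
        rw [Real.volume_Icc]
        congr 1
        field_simp
        ring
    _ = ((Finset.Icc m1 m2).card : ℕ) • ENNReal.ofReal (2*r/α) := by
        rw [Finset.sum_const]
    _ ≤ ENNReal.ofReal (2*r*L + 8*r/α) := by
        rw [nsmul_eq_mul, ← ENNReal.ofReal_natCast, ← ENNReal.ofReal_mul (by positivity)]
        apply ENNReal.ofReal_le_ofReal
        have h2 : (0:ℝ) ≤ 2*r/α := by positivity
        calc ((Finset.Icc m1 m2).card : ℝ) * (2*r/α) ≤ (α*L + 4) * (2*r/α) :=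
              mul_le_mul_of_nonneg_right hcard h2
          _ = 2*r*L + 8*r/α := by field_simp; ring


lemma good_mem
    (n : ℕ) (hn : 1 ≤ n) (σ : ℝ) (hσ0 : 0 < σ) (hσ1 : 2*σ < 1)
    (ε₂ : ℝ) (hε₂ : 0 < ε₂) (R : ℝ) (hR : 1 ≤ R)
    (N : ℕ) (hN : 0 < N) (hNe : R ^ σ = (N:ℝ))
    (q k Q : ℕ) (hq : 0 < q) (hk : 0 < k) (hQ : 0 < Q)
    (hk1 : R ^ (1 - 2*σ) / 2 < ((k*q : ℕ) : ℝ))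
    (hk2 : ((k*q : ℕ) : ℝ) ≤ 3 * R ^ (1-2*σ) / 4)
    (hkerr : (k:ℝ)/Q < ε₂ / (Real.sqrt n * N))
    (z : EuclideanSpace ℝ (Fin n))
    (hz : ∀ i, z i ∈ Set.Ioo (R/(2*Real.sqrt n)) (R/Real.sqrt n))
    (m : Fin n → ℤ)
    (happrox : ∀ i, |(q:ℝ) * ((N:ℝ) * z i / R) - (m i)| ≤ 1/Q) :
    z ∈ {z : EuclideanSpace ℝ (Fin n) |
          ∃ x ∈ {x : EuclideanSpace ℝ (Fin n) |
            (∃ m : Fin n → ℤ,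
              ‖x - (EuclideanSpace.equiv (Fin n) ℝ).symm (fun i => R ^ (σ - 1) * (m i : ℝ))‖
                < ε₂ / R) ∧
            4 ^ (-(n : ℝ) - 2) < ‖x‖ ∧ ‖x‖ < 2 * Real.sqrt n},
          ∃ t ∈ {t : ℝ | (∃ j : ℤ, t = R ^ (2 * σ - 1) * (j : ℝ)) ∧
            4 ^ (-(n : ℝ) - 1) < t ∧ t < 1},
          z = (R / t) • x} ∩ Metric.ball (0 : EuclideanSpace ℝ (Fin n)) R := by
  have hR0 : (0:ℝ) < R := lt_of_lt_of_le one_pos hR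
  have hn0 : (0:ℝ) < n := by exact_mod_cast hn
  have hn1 : (1:ℝ) ≤ n := by exact_mod_cast hn
  have hsn : (0:ℝ) < Real.sqrt n := Real.sqrt_pos.2 hn0
  have hsn1 : (1:ℝ) ≤ Real.sqrt n := by
    rw [show (1:ℝ) = Real.sqrt 1 by simp]
    exact Real.sqrt_le_sqrt (by exact_mod_cast hn)
  have hsq : (Real.sqrt n) ^ 2 = n := Real.sq_sqrt hn0.le
  have hNR : (0:ℝ) < N := Nat.cast_pos.2 hN
  have hQR : (0:ℝ) < Q := Nat.cast_pos.2 hQ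
  have hJ0 : (0:ℝ) < R ^ (1 - 2*σ) := Real.rpow_pos_of_pos hR0 _
  set J := R ^ (1 - 2*σ) with hJdef
  -- identities
  have e1 : R ^ (σ - 1) = (N:ℝ)/R := by
    rw [Real.rpow_sub hR0, Real.rpow_one, hNe]
  have e2 : R ^ (2*σ - 1) = (N:ℝ)^2/R := by
    rw [Real.rpow_sub hR0, Real.rpow_one]
    congr 1
    rw [show 2*σ = σ*2 by ring, Real.rpow_mul hR0.le, hNe]
    norm_num
  have eJ : R ^ (2*σ - 1) = J⁻¹ := by
    rw [hJdef, show 2*σ-1 = -(1-2*σ) by ring, Real.rpow_neg hR0.le]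
  set t := R ^ (2*σ - 1) * ((k*q : ℕ) : ℝ) with htdef
  have ht : t = ((k*q : ℕ) : ℝ) / J := by rw [htdef, eJ]; ring
  have ht12 : 1/2 < t := by
    rw [ht, lt_div_iff₀ hJ0]
    linarith [hk1]
  have ht34 : t ≤ 3/4 := by
    rw [ht, div_le_iff₀ hJ0]
    linarith [hk2]
  have ht0 : 0 < t := lt_trans (by norm_num) ht12
  have ht1 : t < 1 := lt_of_le_of_lt ht34 (by norm_num)
  -- norm of z
  have hzn : R/2 < ‖z‖ ∧ ‖z‖ < R := by
    have hne : (Finset.univ : Finset (Fin n)).Nonempty := by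
      have : Nonempty (Fin n) := ⟨⟨0, by omega⟩⟩
      exact Finset.univ_nonempty
    have hL2 : (R/(2*Real.sqrt n))^2 = R^2/(4*n) := by
      rw [div_pow, mul_pow, hsq]; norm_num
    have hU2 : (R/Real.sqrt n)^2 = R^2/n := by
      rw [div_pow, hsq]
    have hlow : R^2/4 < ∑ i, ‖z i‖^2 := by
      calc R^2/4 = ∑ _i : Fin n, R^2/(4*n) := by
            rw [Finset.sum_const, Finset.card_univ, Fintype.card_fin, nsmul_eq_mul]
            field_simp
        _ < ∑ i, ‖z i‖^2 := by
            apply Finset.sum_lt_sum_of_nonempty hne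
            intro i _
            have h1 := (hz i).1
            have h2 := (hz i).2
            have hzi0 : 0 < z i := lt_trans (by positivity) h1
            rw [Real.norm_eq_abs, sq_abs, ← hL2]
            have hL0 : (0:ℝ) < R/(2*Real.sqrt n) := by positivity
            nlinarith
    have hhigh : ∑ i, ‖z i‖^2 < R^2 := by
      calc ∑ i, ‖z i‖^2 < ∑ _i : Fin n, R^2/n := by
            apply Finset.sum_lt_sum_of_nonempty hne
            intro i _
            have h1 := (hz i).1
            have h2 := (hz i).2
            have hzi0 : 0 < z i := lt_trans (by positivity) h1
            rw [Real.norm_eq_abs, sq_abs, ← hU2]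
            have hL0 : (0:ℝ) < R/(2*Real.sqrt n) := by positivity
            nlinarith
        _ = R^2 := by
            rw [Finset.sum_const, Finset.card_univ, Fintype.card_fin, nsmul_eq_mul]
            field_simp
    rw [EuclideanSpace.norm_eq]
    constructor
    · have := Real.sqrt_lt_sqrt (by positivity) hlow
      calc R/2 = Real.sqrt (R^2/4) := by
            rw [show R^2/4 = (R/2)^2 by ring, Real.sqrt_sq (by positivity)]
        _ < _ := this
    · have := Real.sqrt_lt_sqrt (by positivity) hhigh
      calc Real.sqrt (∑ i, ‖z i‖^2) < Real.sqrt (R^2) := this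
        _ = R := Real.sqrt_sq hR0.le
  -- the four-power bounds
  have h4a : (4:ℝ) ^ (-(n:ℝ) - 1) ≤ 4 ^ (-2:ℝ) :=
    Real.rpow_le_rpow_of_exponent_le (by norm_num) (by push_cast; linarith)
  have h4b : (4:ℝ) ^ (-(n:ℝ) - 2) ≤ 4 ^ (-2:ℝ) :=
    Real.rpow_le_rpow_of_exponent_le (by norm_num) (by push_cast; linarith)
  have h4v : (4:ℝ) ^ (-2:ℝ) = 1/16 := by
    rw [show (-2:ℝ) = -(2:ℕ) by norm_num, Real.rpow_neg (by norm_num), Real.rpow_natCast]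
    norm_num
  -- define x
  set x : EuclideanSpace ℝ (Fin n) := (t/R) • z with hxdef
  have hzx : z = (R/t) • x := by
    rw [hxdef, smul_smul]
    rw [show R/t * (t/R) = 1 by field_simp]
    exact (one_smul _ _).symm
  have hxn : ‖x‖ = (t/R) * ‖z‖ := by
    rw [hxdef, norm_smul, Real.norm_eq_abs, abs_of_pos (by positivity)]
  refine ⟨⟨x, ⟨⟨fun i => (k:ℤ) * m i, ?_⟩, ?_, ?_⟩, t, ⟨⟨((k:ℤ) * (q:ℤ)), by rw [htdef]; push_cast; ring⟩, ?_, ht1⟩, hzx⟩, ?_⟩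
  · -- lattice distance
    have coord : ∀ i, x i - R ^ (σ-1) * (((k:ℤ) * m i : ℤ) : ℝ)
        = ((N:ℝ)/R) * (k:ℝ) * ((q:ℝ) * ((N:ℝ) * z i / R) - m i) := by
      intro i
      have hxi : x i = (t/R) * z i := rfl
      rw [hxi, htdef, e2, e1]
      push_cast
      field_simp
    have coordbound : ∀ i, ‖(x - (EuclideanSpace.equiv (Fin n) ℝ).symm
        (fun i => R ^ (σ - 1) * (((k:ℤ) * m i : ℤ) : ℝ))) i‖ < ε₂ / (Real.sqrt n * R) := by
      intro i
      have happ := happrox i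
      have hdiff : (x - (EuclideanSpace.equiv (Fin n) ℝ).symm
          (fun i => R ^ (σ - 1) * (((k:ℤ) * m i : ℤ) : ℝ))) i
          = x i - R ^ (σ-1) * (((k:ℤ) * m i : ℤ) : ℝ) := rfl
      rw [Real.norm_eq_abs, hdiff, coord i, abs_mul, abs_mul]
      rw [abs_of_pos (by positivity : (0:ℝ) < (N:ℝ)/R), abs_of_nonneg (by positivity : (0:ℝ) ≤ (k:ℝ))]
      have step1 : (N:ℝ)/R * (k:ℝ) * |(q:ℝ) * ((N:ℝ) * z i / R) - m i|
          ≤ (N:ℝ)/R * (k:ℝ) * (1/Q) := by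
        apply mul_le_mul_of_nonneg_left happ (by positivity)
      have step2 : (N:ℝ)/R * (k:ℝ) * (1/Q) < ε₂ / (Real.sqrt n * R) := by
        have h1 : (k:ℝ) * (1/Q) = (k:ℝ)/Q := by ring
        have h2 : (N:ℝ)/R * ((k:ℝ)/Q) < (N:ℝ)/R * (ε₂ / (Real.sqrt n * N)) :=
          mul_lt_mul_of_pos_left hkerr (by positivity)
        have h3 : (N:ℝ)/R * (ε₂ / (Real.sqrt n * N)) = ε₂ / (Real.sqrt n * R) := by
          field_simp
        calc (N:ℝ)/R * (k:ℝ) * (1/Q) = (N:ℝ)/R * ((k:ℝ)/Q) := by ring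
          _ < _ := h2
          _ = _ := h3
      exact lt_of_le_of_lt step1 step2
    rw [EuclideanSpace.norm_eq]
    have hne : (Finset.univ : Finset (Fin n)).Nonempty := by
      have : Nonempty (Fin n) := ⟨⟨0, by omega⟩⟩
      exact Finset.univ_nonempty
    have hsum : ∑ i, ‖(x - (EuclideanSpace.equiv (Fin n) ℝ).symm
        (fun i => R ^ (σ - 1) * (((k:ℤ) * m i : ℤ) : ℝ))) i‖^2 < (ε₂/R)^2 := by
      calc ∑ i, ‖(x - (EuclideanSpace.equiv (Fin n) ℝ).symm
            (fun i => R ^ (σ - 1) * (((k:ℤ) * m i : ℤ) : ℝ))) i‖^2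
          < ∑ _i : Fin n, (ε₂/(Real.sqrt n * R))^2 := by
            apply Finset.sum_lt_sum_of_nonempty hne
            intro i _
            have := coordbound i
            have hnn : (0:ℝ) ≤ ‖(x - (EuclideanSpace.equiv (Fin n) ℝ).symm
              (fun i => R ^ (σ - 1) * (((k:ℤ) * m i : ℤ) : ℝ))) i‖ := norm_nonneg _
            nlinarith
        _ = (ε₂/R)^2 := by
            rw [Finset.sum_const, Finset.card_univ, Fintype.card_fin, nsmul_eq_mul,
              div_pow, mul_pow, hsq, div_pow]
            field_simp
    calc Real.sqrt (∑ i, ‖(x - (EuclideanSpace.equiv (Fin n) ℝ).symm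
          (fun i => R ^ (σ - 1) * (((k:ℤ) * m i : ℤ) : ℝ))) i‖^2)
        < Real.sqrt ((ε₂/R)^2) := Real.sqrt_lt_sqrt (by positivity) hsum
      _ = ε₂/R := Real.sqrt_sq (le_of_lt (by positivity : (0:ℝ) < ε₂/R))
  · -- lower annulus bound for x
    have : ‖x‖ > t/2 := by
      rw [hxn]
      have := hzn.1
      calc t/2 = (t/R) * (R/2) := by field_simp
        _ < (t/R) * ‖z‖ := by
          apply mul_lt_mul_of_pos_left hzn.1 (by positivity)
    calc (4:ℝ) ^ (-(n:ℝ) - 2) ≤ 1/16 := h4v ▸ h4b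
      _ < t/2 := by linarith
      _ < ‖x‖ := this
  · -- upper annulus bound
    have hlt : ‖x‖ < t := by
      rw [hxn]
      calc (t/R) * ‖z‖ < (t/R) * R := mul_lt_mul_of_pos_left hzn.2 (by positivity)
        _ = t := by field_simp
    calc ‖x‖ < t := hlt
      _ < 1 := ht1
      _ ≤ 2 * Real.sqrt n := by linarith
  · -- t lower bound
    calc (4:ℝ) ^ (-(n:ℝ) - 1) ≤ 1/16 := h4v ▸ h4a
      _ < 1/2 := by norm_num
      _ < t := ht12
  · -- ball membership
    rw [Metric.mem_ball, dist_zero_right]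
    exact hzn.2

/-- Measure amplification: with `X` the `ε₂/R`-neighborhood of the lattice
`R^{σ-1} ℤⁿ` intersected with the annulus `{4^{-n-2} < |x| < 2√n}`, and
`T = R^{2σ-1} ℤ ∩ (4^{-n-1}, 1)`, for all sufficiently large `R` with `R^σ` a
positive integer, the set `XR/T = {xR/t : x ∈ X, t ∈ T}` occupies a positive
proportion of the ball `B(0,R)`: `|XR/T ∩ B(0,R)| ≥ c R^n`. -/
theorem measure_amplification (n : ℕ) (hn : 1 ≤ n) (σ : ℝ) (hσ0 : 0 < σ)
    (hσ : σ < 1 / (n + 2)) (ε₂ : ℝ) (hε₂ : 0 < ε₂) :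
    ∃ c : ℝ, 0 < c ∧ ∃ R₀ : ℝ, ∀ R : ℝ, R₀ ≤ R →
      (∃ m : ℕ, 0 < m ∧ R ^ σ = (m : ℝ)) →
      ENNReal.ofReal (c * R ^ (n : ℝ)) ≤
        MeasureTheory.volume
          ({z : EuclideanSpace ℝ (Fin n) |
              ∃ x ∈ {x : EuclideanSpace ℝ (Fin n) |
                (∃ m : Fin n → ℤ,
                  ‖x - (EuclideanSpace.equiv (Fin n) ℝ).symm (fun i => R ^ (σ - 1) * (m i : ℝ))‖
                    < ε₂ / R) ∧
                4 ^ (-(n : ℝ) - 2) < ‖x‖ ∧ ‖x‖ < 2 * Real.sqrt n},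
              ∃ t ∈ {t : ℝ | (∃ j : ℤ, t = R ^ (2 * σ - 1) * (j : ℝ)) ∧
                4 ^ (-(n : ℝ) - 1) < t ∧ t < 1},
              z = (R / t) • x} ∩ Metric.ball (0 : EuclideanSpace ℝ (Fin n)) R) := by
  have hn0 : (0:ℝ) < n := by exact_mod_cast hn
  have hn1 : (1:ℝ) ≤ n := by exact_mod_cast hn
  have hnne : (n:ℝ) ≠ 0 := ne_of_gt hn0
  have hsn : (0:ℝ) < Real.sqrt n := Real.sqrt_pos.2 hn0
  have hsn1 : (1:ℝ) ≤ Real.sqrt n := by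
    rw [show (1:ℝ) = Real.sqrt 1 by simp]
    exact Real.sqrt_le_sqrt hn1
  have hσ1 : 2*σ < 1 := by
    have h3 : (3:ℝ) ≤ (n:ℝ) + 2 := by linarith
    have : (1:ℝ)/((n:ℝ)+2) ≤ 1/3 :=
      div_le_div_of_nonneg_left (by norm_num) (by norm_num) h3
    linarith
  have hσn2 : σ * ((n:ℝ) + 2) < 1 := by
    have := (lt_div_iff₀ (by positivity : (0:ℝ) < (n:ℝ)+2)).1 hσ
    linarith
  set β : ℝ := (1 - 2*σ) * (n:ℝ)⁻¹ with hβdef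
  have hβ : 0 < β := mul_pos (by linarith) (by positivity)
  have hβσ : 0 < β - σ := by
    rw [hβdef, show (1 - 2*σ) * (n:ℝ)⁻¹ - σ = (1 - 2*σ - n*σ) / n by field_simp]
    apply div_pos (by nlinarith) hn0
  set C₁ : ℝ := 2 + 16 * Real.sqrt n with hC₁def
  have hC₁ : 0 < C₁ := by positivity
  set K : ℝ := max 2 (2^(n+4) * C₁^n) with hKdef
  have hK2 : (2:ℝ) ≤ K := le_max_left _ _
  have hKC : 2^(n+4) * C₁^n ≤ K := le_max_right _ _
  have hK0 : (0:ℝ) < K := lt_of_lt_of_le (by norm_num) hK2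
  refine ⟨(1/2) * (1/(2*Real.sqrt n))^n, by positivity, ?_⟩
  have hev : ∀ᶠ R : ℝ in atTop, 1 ≤ R ∧ 8 ≤ R ^ β ∧ 32*C₁ ≤ R ^ β ∧
      16 * Real.sqrt n * K / ε₂ ≤ R ^ (β - σ) :=
    (eventually_ge_atTop 1).and (((tendsto_rpow_atTop hβ).eventually_ge_atTop 8).and
      (((tendsto_rpow_atTop hβ).eventually_ge_atTop (32*C₁)).and
      ((tendsto_rpow_atTop hβσ).eventually_ge_atTop _)))
  obtain ⟨R₀, hR₀⟩ := eventually_atTop.1 hev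
  refine ⟨R₀, fun R hRR hRN => ?_⟩
  obtain ⟨hR1, hA, hC, hB⟩ := hR₀ R hRR
  obtain ⟨N, hN, hNe⟩ := hRN
  have hR0 : (0:ℝ) < R := lt_of_lt_of_le one_pos hR1
  have hNR : (0:ℝ) < N := Nat.cast_pos.2 hN
  have hN1 : (1:ℝ) ≤ N := by exact_mod_cast hN
  set L : ℝ := R / (2 * Real.sqrt n) with hLdef
  have hL0 : 0 < L := by positivity
  set J : ℝ := R ^ (1 - 2*σ) with hJdef
  have hJ0 : 0 < J := Real.rpow_pos_of_pos hR0 _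
  set W : ℝ := (J/4) ^ ((n:ℝ)⁻¹) with hWdef
  have hW0 : 0 < W := Real.rpow_pos_of_pos (by linarith) _
  have hinv1 : (n:ℝ)⁻¹ ≤ 1 := by
    nlinarith [inv_nonneg.2 hn0.le, mul_inv_cancel₀ hnne]
  have hWlow : R ^ β / 4 ≤ W := by
    have h4n : (4:ℝ) ^ ((n:ℝ)⁻¹) ≤ 4 := by
      calc (4:ℝ) ^ ((n:ℝ)⁻¹) ≤ 4 ^ (1:ℝ) :=
            Real.rpow_le_rpow_of_exponent_le (by norm_num) hinv1
        _ = 4 := Real.rpow_one 4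
    have h4p : (0:ℝ) < (4:ℝ) ^ ((n:ℝ)⁻¹) := Real.rpow_pos_of_pos (by norm_num) _
    have hJn : J ^ ((n:ℝ)⁻¹) = R ^ β := by
      rw [hJdef, ← Real.rpow_mul hR0.le]
    rw [hWdef, Real.div_rpow hJ0.le (by norm_num : (0:ℝ) ≤ 4), hJn]
    exact div_le_div_of_nonneg_left (Real.rpow_pos_of_pos hR0 _).le h4p h4n
  have hW2 : 2 ≤ W := le_trans (by linarith only [hA]) hWlow
  set Q : ℕ := ⌊W⌋₊ with hQdef
  have hQle : (Q:ℝ) ≤ W := Nat.floor_le hW0.le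
  have hQgt : W/2 ≤ (Q:ℝ) := by
    have := Nat.lt_floor_add_one W
    have h : W < (Q:ℝ) + 1 := by exact_mod_cast this
    linarith only [h, hW2]
  have hQR : (0:ℝ) < Q := by linarith only [hQgt, hW2]
  have hQpos : 0 < Q := by exact_mod_cast hQR
  have hQβ : R ^ β / 8 ≤ (Q:ℝ) := by linarith only [hWlow, hQgt]
  have hWn : W^n = J/4 := by
    rw [hWdef, ← Real.rpow_natCast ((J/4) ^ ((n:ℝ)⁻¹)) n, ← Real.rpow_mul (by linarith : (0:ℝ) ≤ J/4),
      inv_mul_cancel₀ hnne, Real.rpow_one]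
  have hQn4 : (Q:ℝ)^n ≤ J/4 := by
    rw [← hWn]; exact pow_le_pow_left₀ (Nat.cast_nonneg Q) hQle n
  have hQnJ : J ≤ 2^(n+2) * (Q:ℝ)^n := by
    have h1 : (W/2)^n ≤ (Q:ℝ)^n := pow_le_pow_left₀ (by positivity) hQgt n
    have h2 : (W/2)^n = (J/4)/2^n := by rw [div_pow, hWn]
    have h2n : (0:ℝ) < (2:ℝ)^n := by positivity
    rw [h2] at h1
    have he : J / 4 / 2^n * (4 * 2^n) = J := by field_simp
    calc J = (J/4/2^n) * (4*2^n) := he.symm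
      _ ≤ (Q:ℝ)^n * (4*2^n) := mul_le_mul_of_nonneg_right h1 (by positivity)
      _ = 2^(n+2) * (Q:ℝ)^n := by rw [pow_add]; ring
  set ε' : ℝ := ε₂ / (2 * Real.sqrt n * N) with hε'def
  have hε'0 : 0 < ε' := by positivity
  have hεQK : K ≤ ε' * Q := by
    have hrs : R ^ (β - σ) = R^β / (N:ℝ) := by rw [Real.rpow_sub hR0, hNe]
    have h2 : ε' * (R^β/8) = ε₂/(16*Real.sqrt n) * R^(β-σ) := by
      rw [hrs, hε'def]; field_simp; ring
    have h3 : K = ε₂/(16*Real.sqrt n) * (16*Real.sqrt n * K/ε₂) := by field_simp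
    calc K = ε₂/(16*Real.sqrt n) * (16*Real.sqrt n * K/ε₂) := h3
      _ ≤ ε₂/(16*Real.sqrt n) * R^(β-σ) :=
          mul_le_mul_of_nonneg_left hB (by positivity)
      _ = ε' * (R^β/8) := h2.symm
      _ ≤ ε' * Q := mul_le_mul_of_nonneg_left hQβ hε'0.le
  have hεQ2 : 2 ≤ ε' * Q := le_trans hK2 hεQK
  have hQ4C : 4*C₁ ≤ (Q:ℝ) := by linarith only [hC, hQβ]
  set q₀ : ℕ := ⌈J / (ε' * Q)⌉₊ with hq₀def
  have hq₀ge : J/(ε'*Q) ≤ (q₀:ℝ) := Nat.le_ceil _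
  have hq₀lt : (q₀:ℝ) < J/(ε'*Q) + 1 := Nat.ceil_lt_add_one (by positivity)
  -- sets
  set e := (MeasurableEquiv.toLp 2 (Fin n → ℝ)).symm with hedef
  set cubeP : Set (Fin n → ℝ) := Set.univ.pi (fun _ : Fin n => Set.Ioo L (2*L)) with hcubePdef
  set α : ℕ → ℝ := fun q => (q:ℝ)*N/R with hαdef
  set D : ℕ → Set ℝ := fun q => Set.Ioo L (2*L) ∩
      ⋃ m : ℤ, Set.Icc (((m:ℝ) - 1/Q)/(α q)) (((m:ℝ) + 1/Q)/(α q)) with hDdef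
  set U : Set (Fin n → ℝ) := ⋃ q ∈ Finset.Icc 1 q₀, Set.univ.pi (fun _ : Fin n => D q) with hUdef
  have hαpos : ∀ q : ℕ, 1 ≤ q → 0 < α q := by
    intro q hq
    have : (0:ℝ) < (q:ℝ) := by exact_mod_cast hq
    rw [hαdef]; positivity
  -- containment
  have hsub : (e ⁻¹' cubeP) \ (e ⁻¹' U) ⊆
      {z : EuclideanSpace ℝ (Fin n) |
          ∃ x ∈ {x : EuclideanSpace ℝ (Fin n) |
            (∃ m : Fin n → ℤ,
              ‖x - (EuclideanSpace.equiv (Fin n) ℝ).symm (fun i => R ^ (σ - 1) * (m i : ℝ))‖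
                < ε₂ / R) ∧
            4 ^ (-(n : ℝ) - 2) < ‖x‖ ∧ ‖x‖ < 2 * Real.sqrt n},
          ∃ t ∈ {t : ℝ | (∃ j : ℤ, t = R ^ (2 * σ - 1) * (j : ℝ)) ∧
            4 ^ (-(n : ℝ) - 1) < t ∧ t < 1},
          z = (R / t) • x} ∩ Metric.ball (0 : EuclideanSpace ℝ (Fin n)) R := by
    rintro z ⟨hzc, hznb⟩
    have hzi : ∀ i, z i ∈ Set.Ioo L (2*L) := by
      intro i
      rw [Set.mem_preimage, hcubePdef, Set.mem_univ_pi] at hzc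
      exact hzc i
    obtain ⟨q, hq1, hqQn, happ⟩ := dirichlet_sim n Q hQpos (fun i => (N:ℝ) * z i / R)
    simp only [] at happ
    choose m hm using happ
    have hq0R : (0:ℝ) < (q:ℝ) := by exact_mod_cast hq1
    have hqq₀ : q₀ < q := by
      by_contra hcon
      push_neg at hcon
      apply hznb
      rw [Set.mem_preimage, hUdef]
      apply Set.mem_iUnion₂.2
      refine ⟨q, Finset.mem_Icc.2 ⟨hq1, hcon⟩, ?_⟩
      rw [Set.mem_univ_pi]
      intro i
      refine ⟨hzi i, Set.mem_iUnion.2 ⟨m i, ?_⟩⟩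
      have hα := hαpos q hq1
      have habs := abs_sub_le_iff.1 (hm i)
      have hy : α q * z i = (q:ℝ) * ((N:ℝ) * z i / R) := by rw [hαdef]; field_simp
      constructor
      · show ((m i : ℝ) - 1/Q)/(α q) ≤ z i
        rw [div_le_iff₀ hα, mul_comm, hy]; linarith only [habs.2]
      · show z i ≤ ((m i : ℝ) + 1/Q)/(α q)
        rw [le_div_iff₀ hα, mul_comm, hy]; linarith only [habs.1]
    have hqR : J/(ε'*Q) < (q:ℝ) := by
      have : (q₀:ℝ) < (q:ℝ) := by exact_mod_cast hqq₀
      linarith only [this, hq₀ge]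
    set k : ℕ := ⌊J/(2*q)⌋₊ + 1 with hkdef
    have hk0 : 0 < k := Nat.succ_pos _
    have hkgt : J/(2*q) < (k:ℝ) := by
      have := Nat.lt_floor_add_one (J/(2*(q:ℝ)))
      rw [hkdef]; push_cast; linarith only [this]
    have hkle : (k:ℝ) ≤ J/(2*q) + 1 := by
      have := Nat.floor_le (show (0:ℝ) ≤ J/(2*(q:ℝ)) by positivity)
      rw [hkdef]; push_cast; linarith only [this]
    have hid : (J/(2*(q:ℝ)))*(q:ℝ) = J/2 := by field_simp
    have hmul := mul_lt_mul_of_pos_right hkgt hq0R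
    have hk1 : J/2 < ((k*q : ℕ) : ℝ) := by
      rw [Nat.cast_mul]
      linarith only [hmul, hid]
    have hk2 : ((k*q : ℕ) : ℝ) ≤ 3*J/4 := by
      rw [Nat.cast_mul]
      have hqQnR : (q:ℝ) ≤ (Q:ℝ)^n := by exact_mod_cast hqQn
      have hmul2 := mul_le_mul_of_nonneg_right hkle hq0R.le
      have hid2 : (J/(2*(q:ℝ))+1)*(q:ℝ) = J/2 + q := by field_simp
      linarith only [hmul2, hid2, hqQnR, hQn4]
    have hkerr : (k:ℝ)/Q < ε₂/(Real.sqrt n * N) := by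
      have hεQ0 : (0:ℝ) < ε' * Q := by positivity
      have hJq : J < (q:ℝ) * (ε'*Q) := (div_lt_iff₀ hεQ0).1 hqR
      have e1 : J/(2*q) < ε'*Q/2 := by
        rw [div_lt_div_iff₀ (by positivity) (by norm_num)]
        linarith only [hJq]
      have h1Q : 1/(Q:ℝ) ≤ ε'/2 := by
        rw [div_le_div_iff₀ hQR (by norm_num)]
        linarith only [hεQ2]
      have e2 : (k:ℝ)/Q < ε' := by
        rw [div_lt_iff₀ hQR]
        linarith only [hkle, e1, hεQ2]
      have e3 : ε' < ε₂/(Real.sqrt n * N) := by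
        rw [hε'def]
        apply div_lt_div_of_pos_left hε₂ (by positivity)
        linarith only [mul_pos hsn hNR]
      linarith only [e2, e3]
    have h2L : 2*L = R/Real.sqrt n := by rw [hLdef]; field_simp
    have hzi' : ∀ i, z i ∈ Set.Ioo (R/(2*Real.sqrt n)) (R/Real.sqrt n) := by
      intro i
      rw [← hLdef, ← h2L]
      exact hzi i
    exact good_mem n hn σ hσ0 hσ1 ε₂ hε₂ R hR1 N hN hNe q k Q (by omega) hk0 hQpos hk1 hk2 hkerr z hzi' m hm
  -- measure computations
  have hcubeMeas : MeasurableSet cubeP :=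
    MeasurableSet.univ_pi (fun _ => measurableSet_Ioo)
  have hDMeas : ∀ q : ℕ, MeasurableSet (D q) := by
    intro q
    exact measurableSet_Ioo.inter (MeasurableSet.iUnion (fun m => measurableSet_Icc))
  have hUMeas : MeasurableSet U := by
    apply MeasurableSet.biUnion ((Finset.Icc 1 q₀ : Finset ℕ) : Set ℕ).to_countable
    intro q _
    exact MeasurableSet.univ_pi (fun _ => hDMeas q)
  have mp := EuclideanSpace.volume_preserving_symm_measurableEquiv_toLp (Fin n)
  have hvol_cube : volume (e ⁻¹' cubeP) = ENNReal.ofReal (L^n) := by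
    rw [hedef, mp.measure_preimage hcubeMeas.nullMeasurableSet, hcubePdef, volume_pi_pi]
    have : volume (Set.Ioo L (2*L)) = ENNReal.ofReal L := by
      rw [Real.volume_Ioo]; congr 1; ring
    rw [Finset.prod_congr rfl (fun i _ => this), Finset.prod_const, Finset.card_univ,
      Fintype.card_fin, ← ENNReal.ofReal_pow hL0.le]
  have hvolD : ∀ q : ℕ, 1 ≤ q → q ≤ q₀ → volume (D q) ≤ ENNReal.ofReal (C₁*L/Q) := by
    intro q hq1 _
    have hα := hαpos q hq1
    have hq0R : (0:ℝ) < (q:ℝ) := by exact_mod_cast hq1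
    have hDsub : D q ⊆ {s : ℝ | s ∈ Set.Ioo L (2*L) ∧ ∃ m : ℤ, |α q * s - m| ≤ 1/Q} := by
      rintro s ⟨hs, hmem⟩
      obtain ⟨m, hm1, hm2⟩ := Set.mem_iUnion.1 hmem
      rw [div_le_iff₀ hα] at hm1
      rw [le_div_iff₀ hα] at hm2
      have hc : α q * s = s * α q := mul_comm _ _
      refine ⟨hs, m, abs_sub_le_iff.2 ⟨?_, ?_⟩⟩
      · linarith
      · linarith
    calc volume (D q) ≤ volume {s : ℝ | s ∈ Set.Ioo L (2*L) ∧ ∃ m : ℤ, |α q * s - m| ≤ 1/Q} :=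
          measure_mono hDsub
      _ ≤ ENNReal.ofReal (2*(1/Q)*L + 8*(1/Q)/(α q)) :=
          badline (α q) (1/Q) L hα (by positivity)
            (by rw [div_le_one hQR]; exact_mod_cast hQpos) hL0.le
      _ ≤ ENNReal.ofReal (C₁*L/Q) := by
          apply ENNReal.ofReal_le_ofReal
          have hqN : (1:ℝ) ≤ (q:ℝ)*N := one_le_mul_of_one_le_of_one_le (by exact_mod_cast hq1) hN1
          have e3 : 8*(1/Q)/(α q) = 8*R/((q:ℝ)*N)/Q := by rw [hαdef]; field_simp
          have e4 : 8*R/((q:ℝ)*N) ≤ 8*R := div_le_self (by positivity) hqN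
          have e5 : 8*(1/Q)/(α q) ≤ 8*R/Q := by
            rw [e3]; gcongr
          have hRL : R = 2*Real.sqrt n * L := by rw [hLdef]; field_simp
          have e6 : 8*R/Q = 16*Real.sqrt n*L/Q := by rw [hRL]; ring_nf
          have e7 : C₁*L/Q = 2*L/Q + 16*Real.sqrt n*L/Q := by rw [hC₁def]; field_simp
          have e8 : 2*(1/Q)*L = 2*L/Q := by ring
          rw [e7, e8]
          rw [e6] at e5
          linarith only [e5]
  have hvol_bad : volume (e ⁻¹' U) ≤ ENNReal.ofReal (L^n/2) := by
    rw [hedef, mp.measure_preimage hUMeas.nullMeasurableSet, hUdef]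
    calc volume (⋃ q ∈ Finset.Icc 1 q₀, Set.univ.pi (fun _ : Fin n => D q))
        ≤ ∑ q ∈ Finset.Icc 1 q₀, volume (Set.univ.pi (fun _ : Fin n => D q)) :=
          measure_biUnion_finset_le _ _
      _ ≤ ∑ _q ∈ Finset.Icc 1 q₀, ENNReal.ofReal ((C₁*L/Q)^n) := by
          apply Finset.sum_le_sum
          intro q hq
          obtain ⟨hq1, hq2⟩ := Finset.mem_Icc.1 hq
          rw [volume_pi_pi, Finset.prod_const, Finset.card_univ, Fintype.card_fin]
          calc (volume (D q))^n ≤ (ENNReal.ofReal (C₁*L/Q))^n :=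
                pow_le_pow_left₀ bot_le (hvolD q hq1 hq2) n
            _ = ENNReal.ofReal ((C₁*L/Q)^n) := (ENNReal.ofReal_pow (by positivity) n).symm
      _ = (q₀ : ℕ) • ENNReal.ofReal ((C₁*L/Q)^n) := by
          rw [Finset.sum_const, Nat.card_Icc]
          simp
      _ ≤ ENNReal.ofReal (L^n/2) := by
          rw [nsmul_eq_mul, ← ENNReal.ofReal_natCast, ← ENNReal.ofReal_mul (by positivity)]
          apply ENNReal.ofReal_le_ofReal
          have hCQ : C₁/(Q:ℝ) ≤ 1/4 := by
            rw [div_le_div_iff₀ hQR (by norm_num)]; linarith only [hQ4C]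
          have hCQn : (C₁/(Q:ℝ))^n ≤ ((1:ℝ)/4)^n := pow_le_pow_left₀ (by positivity) hCQ n
          have h14 : ((1:ℝ)/4)^n ≤ 1/4 := by
            calc ((1:ℝ)/4)^n ≤ (1/4)^1 := pow_le_pow_of_le_one (by norm_num) (by norm_num) hn
              _ = 1/4 := pow_one _
          have term2 : (C₁/(Q:ℝ))^n ≤ 1/4 := le_trans hCQn h14
          have hQnpos : (0:ℝ) < (Q:ℝ)^n := by positivity
          have term1 : J/(ε'*Q) * (C₁/(Q:ℝ))^n ≤ 1/4 := by
            have s1 : J/(ε'*Q) * (C₁/(Q:ℝ))^n ≤ (2^(n+2) * (Q:ℝ)^n)/(ε'*Q) * (C₁/(Q:ℝ))^n := by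
              gcongr
            have s2 : (2^(n+2) * (Q:ℝ)^n)/(ε'*Q) * (C₁/(Q:ℝ))^n = 2^(n+2)*C₁^n/(ε'*Q) := by
              rw [div_pow]; field_simp
            have s3 : 2^(n+2)*C₁^n/(ε'*Q) ≤ 1/4 := by
              rw [div_le_div_iff₀ (by positivity) (by norm_num)]
              have hpw : (2:ℝ)^(n+4) = 2^(n+2)*4 := by rw [pow_add, pow_add]; ring
              rw [hpw] at hKC
              linarith only [hKC, hεQK]
            calc J/(ε'*Q) * (C₁/(Q:ℝ))^n ≤ _ := s1
              _ = _ := s2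
              _ ≤ 1/4 := s3
          have key : (q₀:ℝ) * (C₁/(Q:ℝ))^n ≤ 1/2 := by
            have h1 : (q₀:ℝ) * (C₁/(Q:ℝ))^n ≤ (J/(ε'*Q)+1) * (C₁/(Q:ℝ))^n :=
              mul_le_mul_of_nonneg_right hq₀lt.le (by positivity)
            have h2 : (J/(ε'*Q)+1) * (C₁/(Q:ℝ))^n
                = J/(ε'*Q) * (C₁/(Q:ℝ))^n + (C₁/(Q:ℝ))^n := by ring
            linarith only [h1, h2, term1, term2]
          have hsp : (C₁*L/(Q:ℝ))^n = (C₁/(Q:ℝ))^n * L^n := by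
            rw [← mul_pow]; congr 1; ring
          rw [hsp]
          have hLn : (0:ℝ) ≤ L^n := by positivity
          have := mul_le_mul_of_nonneg_right key hLn
          linarith only [this]
  -- assemble
  have hsplit : volume (e ⁻¹' cubeP) ≤ volume ((e ⁻¹' cubeP) \ (e ⁻¹' U)) + volume (e ⁻¹' U) := by
    calc volume (e ⁻¹' cubeP) ≤ volume (((e ⁻¹' cubeP) \ (e ⁻¹' U)) ∪ (e ⁻¹' U)) := by
          apply measure_mono
          intro z hz
          by_cases h : z ∈ e ⁻¹' U
          · exact Or.inr h
          · exact Or.inl ⟨hz, h⟩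
      _ ≤ _ := measure_union_le _ _
  have hfinal : ENNReal.ofReal (L^n/2) ≤ volume ((e ⁻¹' cubeP) \ (e ⁻¹' U)) := by
    have h1 : ENNReal.ofReal (L^n) - ENNReal.ofReal (L^n/2)
        ≤ volume ((e ⁻¹' cubeP) \ (e ⁻¹' U)) := by
      rw [tsub_le_iff_right]
      calc ENNReal.ofReal (L^n) = volume (e ⁻¹' cubeP) := hvol_cube.symm
        _ ≤ volume ((e ⁻¹' cubeP) \ (e ⁻¹' U)) + volume (e ⁻¹' U) := hsplit
        _ ≤ volume ((e ⁻¹' cubeP) \ (e ⁻¹' U)) + ENNReal.ofReal (L^n/2) :=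
            add_le_add_right hvol_bad _
    have h2 : ENNReal.ofReal (L^n) - ENNReal.ofReal (L^n/2) = ENNReal.ofReal (L^n/2) := by
      rw [← ENNReal.ofReal_sub _ (by positivity)]
      congr 1; ring
    rw [h2] at h1
    exact h1
  have hceq : (1/2) * (1/(2*Real.sqrt n))^n * R ^ (n:ℝ) = L^n/2 := by
    rw [Real.rpow_natCast, hLdef]
    rw [div_pow]
    field_simp
    rw [one_pow, one_mul, ← mul_pow, show 2 * Real.sqrt n * (R / (2 * Real.sqrt n)) = R by field_simp]
  rw [hceq]
  exact le_trans hfinal (measure_mono hsub)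
end
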